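/- Multilevel solve error bound: with A_{ℓ+1} = R_ℓ^T A_ℓ R_ℓ + E_ℓ, A_L = B_L B_L^T with B_L invertible, and G = R_0^{-T} ⋯ R_{L−1}^{-T} B_L, the solve error satisfies ‖I − G^{-1} A_0 G^{-T}‖ ≤ ‖B_L^{-1}‖² · Σ_{ℓ=0}^{L−1} ‖E_ℓ‖ · ‖R_{ℓ+1} ⋯ R_{L−1}‖². -/

import Mathlib

open Matrix
open scoped Matrix.Norms.L2Operator

private lemma stmt16_key {N : ℕ} (A R E : ℕ → Matrix (Fin N) (Fin N) ℝ) :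
    ∀ L : ℕ, (∀ ℓ < L, A (ℓ + 1) = (R ℓ)ᵀ * A ℓ * R ℓ + E ℓ) →
    A L = (((List.range L).map R).prod)ᵀ * A 0 * ((List.range L).map R).prod
      + ∑ ℓ ∈ Finset.range L,
          (((List.Ico (ℓ + 1) L).map R).prod)ᵀ * E ℓ * ((List.Ico (ℓ + 1) L).map R).prod := by
  intro L
  induction L with
  | zero => intro _; simp
  | succ L ih =>
    intro hrec
    have h1 : A (L+1) = (R L)ᵀ * A L * R L + E L := hrec L (Nat.lt_succ_self L)
    have h2 := ih (fun ℓ hℓ => hrec ℓ (Nat.lt_succ_of_lt hℓ))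
    have hP : ((List.range (L+1)).map R).prod = ((List.range L).map R).prod * R L := by
      rw [List.range_succ, List.map_append, List.prod_append]; simp
    have hQ : ∀ ℓ ∈ Finset.range L,
        (((List.Ico (ℓ+1) (L+1)).map R).prod)ᵀ * E ℓ * ((List.Ico (ℓ+1) (L+1)).map R).prod
        = (R L)ᵀ * ((((List.Ico (ℓ+1) L).map R).prod)ᵀ * E ℓ * ((List.Ico (ℓ+1) L).map R).prod) * R L := by
      intro ℓ hℓ
      rw [List.Ico.succ_top (Finset.mem_range.mp hℓ), List.map_append, List.prod_append]
      simp [Matrix.transpose_mul, Matrix.mul_assoc]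
    rw [h1, h2, hP, Finset.sum_range_succ, Finset.sum_congr rfl hQ]
    simp [Matrix.transpose_mul, Matrix.mul_add, Matrix.add_mul, Finset.sum_mul, Finset.mul_sum,
      Matrix.mul_assoc, List.Ico.self_empty]
    abel

private lemma stmt16_tr_norm {N : ℕ} (M : Matrix (Fin N) (Fin N) ℝ) : ‖Mᵀ‖ = ‖M‖ := by
  rw [show Mᵀ = Mᴴ from by ext i j; simp [Matrix.conjTranspose_apply]]
  exact Matrix.l2_opNorm_conjTranspose M

/-- Multilevel solve error bound for the hierarchical factorization. -/
theorem stmt_16 {N : ℕ} (L : ℕ)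
    (A R E : ℕ → Matrix (Fin N) (Fin N) ℝ)
    (hR : ∀ ℓ, IsUnit (R ℓ))
    (hrec : ∀ ℓ < L, A (ℓ + 1) = (R ℓ)ᵀ * A ℓ * R ℓ + E ℓ)
    (B : Matrix (Fin N) (Fin N) ℝ) (hB : IsUnit B) (hAL : A L = B * Bᵀ)
    (G : Matrix (Fin N) (Fin N) ℝ)
    (hG : G = ((((List.range L).map R).prod)⁻¹)ᵀ * B) :
    ‖1 - G⁻¹ * A 0 * (G⁻¹)ᵀ‖ ≤
      ‖B⁻¹‖ ^ 2 * ∑ ℓ ∈ Finset.range L,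
        ‖E ℓ‖ * ‖((List.Ico (ℓ + 1) L).map R).prod‖ ^ 2 := by
  set P : Matrix (Fin N) (Fin N) ℝ := ((List.range L).map R).prod with hPdef
  have hPu : IsUnit P := List.prod_isUnit (by
    intro m hm
    obtain ⟨ℓ, -, rfl⟩ := List.mem_map.mp hm
    exact hR ℓ)
  have hPd : IsUnit P.det := (Matrix.isUnit_iff_isUnit_det _).mp hPu
  have hBd : IsUnit B.det := (Matrix.isUnit_iff_isUnit_det _).mp hB
  have hGinv : G⁻¹ = B⁻¹ * Pᵀ := by
    rw [hG, Matrix.mul_inv_rev, Matrix.transpose_nonsing_inv,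
      Matrix.nonsing_inv_nonsing_inv _ (by rwa [Matrix.det_transpose])]
  have hkey := stmt16_key A R E L hrec
  have hmain : 1 - G⁻¹ * A 0 * (G⁻¹)ᵀ
      = ∑ ℓ ∈ Finset.range L,
          B⁻¹ * ((((List.Ico (ℓ + 1) L).map R).prod)ᵀ * E ℓ
            * ((List.Ico (ℓ + 1) L).map R).prod) * (B⁻¹)ᵀ := by
    have hone : B⁻¹ * A L * (B⁻¹)ᵀ = 1 := by
      rw [hAL, Matrix.transpose_nonsing_inv, ← Matrix.mul_assoc,
        Matrix.nonsing_inv_mul B hBd, Matrix.one_mul,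
        Matrix.mul_nonsing_inv _ (by rwa [Matrix.det_transpose])]
    calc 1 - G⁻¹ * A 0 * (G⁻¹)ᵀ
        = B⁻¹ * (A L - Pᵀ * A 0 * P) * (B⁻¹)ᵀ := by
          rw [Matrix.mul_sub, Matrix.sub_mul, hone, hGinv, Matrix.transpose_mul,
            Matrix.transpose_transpose]
          congr 1
          simp only [Matrix.mul_assoc]
      _ = ∑ ℓ ∈ Finset.range L,
          B⁻¹ * ((((List.Ico (ℓ + 1) L).map R).prod)ᵀ * E ℓ
            * ((List.Ico (ℓ + 1) L).map R).prod) * (B⁻¹)ᵀ := by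
          rw [hkey]
          rw [show Pᵀ * A 0 * P + (∑ ℓ ∈ Finset.range L,
              (((List.Ico (ℓ + 1) L).map R).prod)ᵀ * E ℓ * ((List.Ico (ℓ + 1) L).map R).prod)
              - Pᵀ * A 0 * P = ∑ ℓ ∈ Finset.range L,
              (((List.Ico (ℓ + 1) L).map R).prod)ᵀ * E ℓ * ((List.Ico (ℓ + 1) L).map R).prod
            from by abel]
          rw [Finset.mul_sum, Finset.sum_mul]
  rw [hmain]
  calc ‖∑ ℓ ∈ Finset.range L,
          B⁻¹ * ((((List.Ico (ℓ + 1) L).map R).prod)ᵀ * E ℓ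
            * ((List.Ico (ℓ + 1) L).map R).prod) * (B⁻¹)ᵀ‖
      ≤ ∑ ℓ ∈ Finset.range L, ‖B⁻¹ * ((((List.Ico (ℓ + 1) L).map R).prod)ᵀ * E ℓ
            * ((List.Ico (ℓ + 1) L).map R).prod) * (B⁻¹)ᵀ‖ := norm_sum_le _ _
    _ ≤ ∑ ℓ ∈ Finset.range L, ‖B⁻¹‖ ^ 2 * (‖E ℓ‖ * ‖((List.Ico (ℓ + 1) L).map R).prod‖ ^ 2) := by
        apply Finset.sum_le_sum
        intro ℓ _
        set Q : Matrix (Fin N) (Fin N) ℝ := ((List.Ico (ℓ + 1) L).map R).prod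
        have hX : ‖Qᵀ * E ℓ * Q‖ ≤ ‖E ℓ‖ * ‖Q‖ ^ 2 := by
          calc ‖Qᵀ * E ℓ * Q‖ ≤ ‖Qᵀ * E ℓ‖ * ‖Q‖ := norm_mul_le _ _
            _ ≤ ‖Qᵀ‖ * ‖E ℓ‖ * ‖Q‖ :=
                mul_le_mul_of_nonneg_right (norm_mul_le _ _) (norm_nonneg _)
            _ = ‖E ℓ‖ * ‖Q‖ ^ 2 := by rw [stmt16_tr_norm]; ring
        calc ‖B⁻¹ * (Qᵀ * E ℓ * Q) * (B⁻¹)ᵀ‖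
            ≤ ‖B⁻¹ * (Qᵀ * E ℓ * Q)‖ * ‖(B⁻¹)ᵀ‖ := norm_mul_le _ _
          _ ≤ ‖B⁻¹‖ * ‖Qᵀ * E ℓ * Q‖ * ‖B⁻¹‖ := by
              rw [stmt16_tr_norm]
              exact mul_le_mul_of_nonneg_right (norm_mul_le _ _) (norm_nonneg _)
          _ ≤ ‖B⁻¹‖ ^ 2 * (‖E ℓ‖ * ‖Q‖ ^ 2) := by
              nlinarith [norm_nonneg (B⁻¹ : Matrix (Fin N) (Fin N) ℝ),
                norm_nonneg (Qᵀ * E ℓ * Q), norm_nonneg (E ℓ), norm_nonneg Q]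
    _ = ‖B⁻¹‖ ^ 2 * ∑ ℓ ∈ Finset.range L,
        ‖E ℓ‖ * ‖((List.Ico (ℓ + 1) L).map R).prod‖ ^ 2 := by rw [Finset.mul_sum]
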